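/- For a weighted poset P_π on {1,…,n} and any x ∈ 𝔽₂ⁿ and integer r ≥ 0, the sphere of radius r satisfies |S_{P_π}(x;r)| = 1 + Σ_{ω=1}^{r} Σ_{i=1}^{ω} Σ_{j=1}^{i} 2^{i−j} · Ω_j^ω(i), where Ω_j^ω(i) denotes the number of order ideals of P_π of cardinality i, total weight ω, and having exactly j maximal elements. In particular the sphere size does not depend on the center x. -/

import Mathlib

open Classical

noncomputable def wtP {α : Type*} [Fintype α] (le : α → α → Prop) (π : α → ℕ)
    (x : α → ZMod 2) : ℕ :=
  ∑ j ∈ Finset.univ.filter (fun j => ∃ i, x i ≠ 0 ∧ le j i), π j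

noncomputable def dP {α : Type*} [Fintype α] (le : α → α → Prop) (π : α → ℕ)
    (x y : α → ZMod 2) : ℕ :=
  wtP le π (x - y)

noncomputable def Omega {α : Type*} [Fintype α] (le : α → α → Prop) (π : α → ℕ)
    (j ω i : ℕ) : ℕ :=
  (Finset.univ.filter (fun I : Finset α =>
      (∀ a ∈ I, ∀ b, le b a → b ∈ I) ∧
      I.card = i ∧ (∑ a ∈ I, π a) = ω ∧
      (I.filter (fun a => ∀ b ∈ I, le a b → a = b)).card = j)).card

noncomputable def idl {α : Type*} [Fintype α] (le : α → α → Prop)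
    (x : α → ZMod 2) : Finset α :=
  Finset.univ.filter (fun j => ∃ i, x i ≠ 0 ∧ le j i)

noncomputable def maxSet {α : Type*} (le : α → α → Prop) (I : Finset α) : Finset α :=
  I.filter (fun a => ∀ b ∈ I, le a b → a = b)

lemma wtP_eq {α : Type*} [Fintype α] (le : α → α → Prop) (π : α → ℕ) (x : α → ZMod 2) :
    wtP le π x = ∑ a ∈ idl le x, π a := rfl

lemma mem_idl {α : Type*} [Fintype α] {le : α → α → Prop} {z : α → ZMod 2} {a : α} :
    a ∈ idl le z ↔ ∃ i, z i ≠ 0 ∧ le a i := by simp [idl]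

lemma mem_maxSet {α : Type*} {le : α → α → Prop} {I : Finset α} {a : α} :
    a ∈ maxSet le I ↔ a ∈ I ∧ ∀ b ∈ I, le a b → a = b := by simp [maxSet]

section Aux
variable {α : Type*} [Fintype α] [DecidableEq α] {le : α → α → Prop}
  (hrefl : ∀ i, le i i) (hantisymm : ∀ i j, le i j → le j i → i = j)
  (htrans : ∀ i j l, le i j → le j l → le i l)

include hrefl hantisymm htrans

lemma exists_maximal_above (I : Finset α) :
    ∀ a ∈ I, ∃ m ∈ maxSet le I, le a m := by
  have key : ∀ N : ℕ, ∀ a ∈ I, (I.filter (fun b => le a b)).card ≤ N →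
      ∃ m ∈ maxSet le I, le a m := by
    intro N
    induction N with
    | zero =>
      intro a ha h
      exfalso
      have : a ∈ I.filter (fun b => le a b) := Finset.mem_filter.2 ⟨ha, hrefl a⟩
      have := Finset.card_pos.2 ⟨a, this⟩
      omega
    | succ N ih =>
      intro a ha h
      by_cases hm : ∀ b ∈ I, le a b → a = b
      · exact ⟨a, mem_maxSet.2 ⟨ha, hm⟩, hrefl a⟩
      · push_neg at hm
        obtain ⟨b, hb, hab, hne⟩ := hm
        have hsub : I.filter (fun c => le b c) ⊂ I.filter (fun c => le a c) := by
          constructor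
          · intro c hc
            rw [Finset.mem_filter] at hc ⊢
            exact ⟨hc.1, htrans _ _ _ hab hc.2⟩
          · intro hcon
            have : a ∈ I.filter (fun c => le b c) :=
              hcon (Finset.mem_filter.2 ⟨ha, hrefl a⟩)
            exact hne (hantisymm _ _ hab (Finset.mem_filter.1 this).2)
        have := Finset.card_lt_card hsub
        obtain ⟨m, hmI, hbm⟩ := ih b hb (by omega)
        exact ⟨m, hmI, htrans _ _ _ hab hbm⟩
  intro a ha
  exact key _ a ha le_rfl

lemma idl_eq_iff (I : Finset α) (hI : ∀ a ∈ I, ∀ b, le b a → b ∈ I) (z : α → ZMod 2) :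
    idl le z = I ↔ ((∀ a, z a ≠ 0 → a ∈ I) ∧ ∀ m ∈ maxSet le I, z m ≠ 0) := by
  constructor
  · rintro rfl
    constructor
    · intro a ha
      exact mem_idl.2 ⟨a, ha, hrefl a⟩
    · intro m hm
      rw [mem_maxSet] at hm
      obtain ⟨hmI, hmax⟩ := hm
      obtain ⟨i, hzi, hmi⟩ := mem_idl.1 hmI
      have hiI : i ∈ idl le z := mem_idl.2 ⟨i, hzi, hrefl i⟩
      have := hmax i hiI hmi
      subst this; exact hzi
  · rintro ⟨hsupp, hmax⟩
    apply Finset.Subset.antisymm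
    · intro a ha
      obtain ⟨i, hzi, hai⟩ := mem_idl.1 ha
      exact hI i (hsupp i hzi) a hai
    · intro a ha
      obtain ⟨m, hmM, ham⟩ := exists_maximal_above hrefl hantisymm htrans I a ha
      exact mem_idl.2 ⟨m, hmax m hmM, ham⟩

lemma count_fiber (I : Finset α) (hI : ∀ a ∈ I, ∀ b, le b a → b ∈ I) :
    (Finset.univ.filter (fun z : α → ZMod 2 => idl le z = I)).card
      = 2 ^ (I.card - (maxSet le I).card) := by
  set M := maxSet le I with hM
  have hMI : M ⊆ I := fun a ha => (mem_maxSet.1 ha).1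
  have hval : ∀ v : ZMod 2, v ≠ 0 → v = 1 := by decide
  have hcard : ((I \ M).powerset).card = 2 ^ (I.card - M.card) := by
    rw [Finset.card_powerset, Finset.card_sdiff_of_subset hMI]
  rw [← hcard]
  apply Finset.card_bij' (i := fun z _ => (Finset.univ.filter fun a => z a ≠ 0) \ M)
    (j := fun S _ => fun a => if a ∈ S ∪ M then (1 : ZMod 2) else 0)
  · intro z hz
    rw [Finset.mem_filter] at hz
    have := (idl_eq_iff hrefl hantisymm htrans I hI z).1 hz.2
    rw [Finset.mem_powerset]
    intro a ha
    rw [Finset.mem_sdiff, Finset.mem_filter] at ha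
    exact Finset.mem_sdiff.2 ⟨this.1 a ha.1.2, ha.2⟩
  · intro S hS
    rw [Finset.mem_powerset] at hS
    refine Finset.mem_filter.2 ⟨Finset.mem_univ _, ?_⟩
    rw [idl_eq_iff hrefl hantisymm htrans I hI]
    constructor
    · intro a ha
      by_cases h : a ∈ S ∪ M
      · rcases Finset.mem_union.1 h with h | h
        · exact (Finset.mem_sdiff.1 (hS h)).1
        · exact hMI h
      · simp [h] at ha
    · intro m hm
      have : m ∈ S ∪ M := Finset.mem_union_right _ hm
      simp [this]
  · intro z hz
    rw [Finset.mem_filter] at hz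
    have hc := (idl_eq_iff hrefl hantisymm htrans I hI z).1 hz.2
    funext a
    by_cases h : a ∈ (Finset.univ.filter fun a => z a ≠ 0) \ M ∪ M
    · rw [if_pos h]
      rcases Finset.mem_union.1 h with h | h
      · exact ((hval _ (Finset.mem_filter.1 (Finset.mem_sdiff.1 h).1).2)).symm
      · exact (hval _ (hc.2 a h)).symm
    · rw [if_neg h]
      by_contra hne
      apply h
      by_cases hm : a ∈ M
      · exact Finset.mem_union_right _ hm
      · exact Finset.mem_union_left _ (Finset.mem_sdiff.2
          ⟨Finset.mem_filter.2 ⟨Finset.mem_univ _, fun h0 => hne h0.symm⟩, hm⟩)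
  · intro S hS
    rw [Finset.mem_powerset] at hS
    ext a
    simp only [Finset.mem_sdiff, Finset.mem_filter, Finset.mem_univ, true_and]
    constructor
    · rintro ⟨h1, h2⟩
      by_cases h : a ∈ S ∪ M
      · rcases Finset.mem_union.1 h with h | h
        · exact h
        · exact absurd h h2
      · simp [h] at h1
    · intro ha
      have hSM : a ∈ S ∪ M := Finset.mem_union_left _ ha
      refine ⟨by simp [hSM], fun hm => ?_⟩
      exact (Finset.mem_sdiff.1 (hS ha)).2 hm

end Aux

lemma Omega_eq {α : Type*} [Fintype α] (le : α → α → Prop) (π : α → ℕ) (j ω i : ℕ) :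
    Omega le π j ω i = (Finset.univ.filter (fun I : Finset α =>
      (∀ a ∈ I, ∀ b, le b a → b ∈ I) ∧
      I.card = i ∧ (∑ a ∈ I, π a) = ω ∧ (maxSet le I).card = j)).card := by
  unfold Omega
  congr 1
  ext I
  simp only [Finset.mem_filter, Finset.mem_univ, true_and]
  unfold maxSet
  congr!

theorem stmt_13 {n : ℕ} (le : Fin n → Fin n → Prop)
    (hrefl : ∀ i, le i i)
    (hantisymm : ∀ i j, le i j → le j i → i = j)
    (htrans : ∀ i j l, le i j → le j l → le i l)
    (π : Fin n → ℕ) (hπ : ∀ i, 0 < π i)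
    (x : Fin n → ZMod 2) (r : ℕ) :
    (Finset.univ.filter (fun y : Fin n → ZMod 2 => dP le π x y ≤ r)).card =
      1 + ∑ ω ∈ Finset.Icc 1 r, ∑ i ∈ Finset.Icc 1 ω, ∑ j ∈ Finset.Icc 1 i,
        2 ^ (i - j) * Omega le π j ω i := by
  -- Step 1: recenter at 0
  have h1 : (Finset.univ.filter (fun y : Fin n → ZMod 2 => dP le π x y ≤ r)).card
      = (Finset.univ.filter (fun z : Fin n → ZMod 2 => wtP le π z ≤ r)).card := by
    apply Finset.card_bij' (i := fun y _ => x - y) (j := fun z _ => x - z)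
    · intro y hy
      rw [Finset.mem_filter] at hy ⊢
      exact ⟨Finset.mem_univ _, hy.2⟩
    · intro z hz
      rw [Finset.mem_filter] at hz ⊢
      refine ⟨Finset.mem_univ _, ?_⟩
      show wtP le π (x - (x - z)) ≤ r
      rw [sub_sub_cancel]; exact hz.2
    · intro y _; exact sub_sub_cancel x y
    · intro z _; exact sub_sub_cancel x z
  rw [h1]
  -- ideal facts
  have hidl_ideal : ∀ z : Fin n → ZMod 2, ∀ a ∈ idl le z, ∀ b, le b a → b ∈ idl le z := by
    intro z a ha b hba
    obtain ⟨i, hzi, hai⟩ := mem_idl.1 ha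
    exact mem_idl.2 ⟨i, hzi, htrans _ _ _ hba hai⟩
  set T : Finset (Finset (Fin n)) :=
    Finset.univ.filter (fun I : Finset (Fin n) =>
      (∀ a ∈ I, ∀ b, le b a → b ∈ I) ∧ (∑ a ∈ I, π a) ≤ r) with hT
  have hmemT : ∀ I, I ∈ T ↔ ((∀ a ∈ I, ∀ b, le b a → b ∈ I) ∧ (∑ a ∈ I, π a) ≤ r) := by
    intro I; rw [hT]; simp
  -- Step 2: fiberwise over ideals
  have h2 : (Finset.univ.filter (fun z : Fin n → ZMod 2 => wtP le π z ≤ r)).card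
      = ∑ I ∈ T, 2 ^ (I.card - (maxSet le I).card) := by
    rw [Finset.card_eq_sum_card_fiberwise (f := fun z => idl le z) (t := T)
      (fun z hz => by
        rw [Finset.mem_coe, Finset.mem_filter] at hz
        rw [Finset.mem_coe, hmemT]
        exact ⟨hidl_ideal z, by rw [← wtP_eq]; exact hz.2⟩)]
    apply Finset.sum_congr rfl
    intro I hI
    rw [hmemT] at hI
    rw [← count_fiber hrefl hantisymm htrans I hI.1]
    congr 1
    ext z
    simp only [Finset.mem_filter, Finset.mem_univ, true_and]
    constructor
    · exact fun h => h.2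
    · intro h
      refine ⟨?_, h⟩
      rw [wtP_eq, h]; exact hI.2
  rw [h2]
  -- Step 3: split off the empty ideal
  rw [← Finset.sum_filter_add_sum_filter_not T (fun I => I = ∅)]
  have hempty : T.filter (fun I => I = ∅) = {∅} := by
    ext I
    simp only [Finset.mem_filter, Finset.mem_singleton]
    constructor
    · exact fun h => h.2
    · rintro rfl
      refine ⟨(hmemT ∅).2 ⟨by simp, by simp⟩, rfl⟩
  rw [hempty]
  have hmax_empty : maxSet le (∅ : Finset (Fin n)) = ∅ := by
    ext a; simp [mem_maxSet]
  rw [Finset.sum_singleton, hmax_empty]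
  simp only [Finset.card_empty, Nat.sub_zero, pow_zero]
  congr 1
  -- Step 4: the nonempty ideals, fiberwise by weight, card, number of maximal elements
  set S := T.filter (fun I => ¬ I = ∅) with hS
  have hmemS : ∀ I, I ∈ S ↔ ((∀ a ∈ I, ∀ b, le b a → b ∈ I) ∧ (∑ a ∈ I, π a) ≤ r ∧ I ≠ ∅) := by
    intro I; rw [hS]; simp only [Finset.mem_filter, hmemT]; tauto
  have hcard_le_wt : ∀ I : Finset (Fin n), I.card ≤ ∑ a ∈ I, π a := by
    intro I
    rw [Finset.card_eq_sum_ones]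
    exact Finset.sum_le_sum (fun a _ => hπ a)
  rw [← Finset.sum_fiberwise_of_maps_to (g := fun I => ∑ a ∈ I, π a) (t := Finset.Icc 1 r)
    (fun I hI => by
      rw [hmemS] at hI
      simp only [Finset.mem_Icc]
      obtain ⟨a, ha⟩ := Finset.nonempty_iff_ne_empty.2 hI.2.2
      refine ⟨?_, hI.2.1⟩
      have h1 := hcard_le_wt I
      have h2 : 0 < I.card := Finset.card_pos.2 ⟨a, ha⟩
      omega)]
  apply Finset.sum_congr rfl
  intro ω hω
  rw [Finset.mem_Icc] at hω
  rw [← Finset.sum_fiberwise_of_maps_to (g := fun I => I.card) (t := Finset.Icc 1 ω)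
    (fun I hI => by
      simp only [Finset.mem_filter, hmemS] at hI
      simp only [Finset.mem_Icc]
      obtain ⟨a, ha⟩ := Finset.nonempty_iff_ne_empty.2 hI.1.2.2
      have h1 := hcard_le_wt I
      have h2 : 0 < I.card := Finset.card_pos.2 ⟨a, ha⟩
      rw [hI.2] at h1
      omega)]
  apply Finset.sum_congr rfl
  intro i hi
  rw [Finset.mem_Icc] at hi
  rw [← Finset.sum_fiberwise_of_maps_to (g := fun I => (maxSet le I).card) (t := Finset.Icc 1 i)
    (fun I hI => by
      simp only [Finset.mem_filter, hmemS] at hI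
      simp only [Finset.mem_Icc]
      obtain ⟨a, ha⟩ := Finset.nonempty_iff_ne_empty.2 hI.1.1.2.2
      obtain ⟨m, hm, -⟩ := exists_maximal_above hrefl hantisymm htrans I a ha
      have h1 : 0 < (maxSet le I).card := Finset.card_pos.2 ⟨m, hm⟩
      have h2 : (maxSet le I).card ≤ I.card :=
        Finset.card_le_card (fun b hb => (mem_maxSet.1 hb).1)
      rw [hI.2] at h2
      omega)]
  apply Finset.sum_congr rfl
  intro j hj
  rw [Finset.mem_Icc] at hj
  have hsum : ∀ I ∈ ((S.filter (fun I => ∑ a ∈ I, π a = ω)).filter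
      (fun I => I.card = i)).filter (fun I => (maxSet le I).card = j),
      2 ^ (I.card - (maxSet le I).card) = 2 ^ (i - j) := by
    intro I hI
    simp only [Finset.mem_filter] at hI
    rw [hI.1.2, hI.2]
  rw [Finset.sum_congr rfl hsum, Finset.sum_const, smul_eq_mul, mul_comm]
  congr 1
  rw [Omega_eq]
  congr 1
  ext I
  simp only [Finset.mem_filter, Finset.mem_univ, true_and]
  rw [hmemS]
  constructor
  · rintro ⟨⟨⟨⟨hid, -, -⟩, hwt⟩, hc⟩, hmx⟩
    exact ⟨hid, hc, hwt, hmx⟩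
  · rintro ⟨hid, hc, hwt, hmx⟩
    have hne : I ≠ ∅ := by
      intro h
      rw [h, Finset.card_empty] at hc
      omega
    exact ⟨⟨⟨⟨hid, by rw [hwt]; exact hω.2, hne⟩, hwt⟩, hc⟩, hmx⟩
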